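/- Let p be an odd prime, let k be an algebraically closed field of characteristic p, and let h_1, h_2, h_3 be positive integers with h_i ≡ (p+1)/2 (mod p) for i = 1, 2, 3. Then there exist pairwise distinct elements a_1, a_2, a_3 of k such that the rational function 1/((x − a_1)^{h_1}(x − a_2)^{h_2}(x − a_3)^{h_3}) is exact. -/

import Mathlib

open Polynomial

/-- `HasDerivRF f g` means `g` is the formal derivative of the rational function `f` in `k(x)`:
if `f = u / v` with `v ≠ 0`, then `g = (u' v - u v') / v ^ 2`. -/
def HasDerivRF {k : Type*} [Field k] (f g : RatFunc k) : Prop :=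
  ∃ u v : Polynomial k, v ≠ 0 ∧
    f = algebraMap (Polynomial k) (RatFunc k) u / algebraMap (Polynomial k) (RatFunc k) v ∧
    g = algebraMap (Polynomial k) (RatFunc k)
          (Polynomial.derivative u * v - u * Polynomial.derivative v) /
        algebraMap (Polynomial k) (RatFunc k) (v ^ 2)

/-- A rational function is exact if it is the formal derivative of some rational function. -/
def IsExactRF {k : Type*} [Field k] (g : RatFunc k) : Prop := ∃ f : RatFunc k, HasDerivRF f g

lemma exists_antideriv {k : Type*} [Field k] (p : ℕ) [CharP k p] (W : Polynomial k) (N : ℕ)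
    (hdeg : W.natDegree < N)
    (hcoeff : ∀ i, p ∣ (i + 1) → W.coeff i = 0) :
    ∃ q : Polynomial k, derivative q = W := by
  refine ⟨∑ i ∈ Finset.range N, C ((((i+1 : ℕ)) : k)⁻¹ * W.coeff i) * X ^ (i+1), ?_⟩
  rw [derivative_sum]
  conv_rhs => rw [W.as_sum_range' N hdeg]
  refine Finset.sum_congr rfl fun i _ => ?_
  rw [derivative_C_mul_X_pow, ← C_mul_X_pow_eq_monomial]
  simp only [Nat.add_sub_cancel]
  congr 1
  by_cases h : p ∣ (i + 1)
  · rw [hcoeff i h]; ring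
  · have h0 : ((i+1 : ℕ) : k) ≠ 0 := by
      rw [Ne, CharP.cast_eq_zero_iff k p]; exact h
    push_cast at h0
    field_simp
    rw [mul_div_cancel_left₀ _ (by exact_mod_cast h0 : ((i+1 : ℕ) : k) ≠ 0)]

lemma coeff_P_pow {k : Type*} [Field k] (m : ℕ) (l : k) :
    ((X * ((X - C 1) * (X - C l))) ^ m).coeff (2 * m)
      = (-1 : k) ^ m * ∑ i ∈ Finset.range (m + 1), (m.choose i : k) ^ 2 * l ^ i := by
  rw [mul_pow, mul_pow, two_mul, coeff_X_pow_mul,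
    coeff_mul, Finset.Nat.sum_antidiagonal_eq_sum_range_succ_mk, Finset.mul_sum]
  refine Finset.sum_congr rfl fun i hi => ?_
  have him : i ≤ m := Nat.lt_succ_iff.mp (Finset.mem_range.mp hi)
  have e1 : (X - C (1:k)) = X + C (-1) := by rw [C_neg]; ring
  have e2 : (X - C l) = X + C (-l) := by rw [C_neg]; ring
  rw [e1, e2, coeff_X_add_C_pow, coeff_X_add_C_pow, Nat.choose_symm him,
    Nat.sub_sub_self him]
  have : (-1 : k) ^ (m - i) * (-1 : k) ^ i = (-1) ^ m := by
    rw [← pow_add, Nat.sub_add_cancel him]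
  rw [neg_pow l]
  ring_nf
  rw [← this]
  ring

lemma sum_choose_sq (m : ℕ) : ∑ i ∈ Finset.range (m + 1), (m.choose i) ^ 2 = (m + m).choose m := by
  rw [Nat.add_choose_eq, Finset.Nat.sum_antidiagonal_eq_sum_range_succ_mk]
  refine Finset.sum_congr rfl fun i hi => ?_
  have him : i ≤ m := Nat.lt_succ_iff.mp (Finset.mem_range.mp hi)
  rw [Nat.choose_symm him, sq]


/-- For an odd prime `p` and `hᵢ ≡ (p+1)/2 (mod p)`, there exist pairwise distinct
`a₁, a₂, a₃` such that `1/((x-a₁)^{h₁}(x-a₂)^{h₂}(x-a₃)^{h₃})` is exact. -/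
theorem stmt4 {k : Type*} [Field k] [IsAlgClosed k] (p : ℕ) (hp : p.Prime) (hodd : Odd p)
    [CharP k p] (h₁ h₂ h₃ : ℕ) (hpos₁ : 0 < h₁) (hpos₂ : 0 < h₂) (hpos₃ : 0 < h₃)
    (hc₁ : h₁ ≡ (p + 1) / 2 [MOD p]) (hc₂ : h₂ ≡ (p + 1) / 2 [MOD p])
    (hc₃ : h₃ ≡ (p + 1) / 2 [MOD p]) :
    ∃ a₁ a₂ a₃ : k, a₁ ≠ a₂ ∧ a₁ ≠ a₃ ∧ a₂ ≠ a₃ ∧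
      IsExactRF (((RatFunc.X - RatFunc.C a₁) ^ h₁ * (RatFunc.X - RatFunc.C a₂) ^ h₂ *
        (RatFunc.X - RatFunc.C a₃) ^ h₃)⁻¹) := by
  obtain ⟨m, hpm⟩ : ∃ m, p = 2 * m + 1 := by
    obtain ⟨t, ht⟩ := hodd; exact ⟨t, by omega⟩
  have hp2 : p ≠ 2 := by rintro rfl; revert hodd; decide
  have hm1 : 1 ≤ m := by have := hp.two_le; omega
  -- the Hasse polynomial
  set H : Polynomial k := ∑ i ∈ Finset.range (m + 1), C ((m.choose i : k) ^ 2) * X ^ i with hH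
  have hHeval : ∀ x : k, H.eval x = ∑ i ∈ Finset.range (m + 1), (m.choose i : k) ^ 2 * x ^ i := by
    intro x; rw [hH, eval_finset_sum]; simp
  have hHcoeff : H.coeff m = 1 := by
    rw [hH, finset_sum_coeff]
    rw [Finset.sum_eq_single m]
    · simp
    · intro i hi hne; rw [coeff_C_mul, coeff_X_pow, if_neg (fun h => hne h.symm), mul_zero]
    · intro h; exact absurd (Finset.self_mem_range_succ m) h
  have hHne : H ≠ 0 := fun h => by simp [h] at hHcoeff
  have hHdeg : H.degree ≠ 0 := by
    intro h
    have h1 : m ≤ H.natDegree := le_natDegree_of_ne_zero (by rw [hHcoeff]; exact one_ne_zero)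
    rw [degree_eq_natDegree hHne] at h
    have : H.natDegree = 0 := by exact_mod_cast h
    omega
  obtain ⟨l, hl⟩ := IsAlgClosed.exists_root H hHdeg
  have hlroot : H.eval l = 0 := hl
  -- l ≠ 0 and l ≠ 1
  have hl0 : l ≠ 0 := by
    rintro rfl
    rw [hHeval 0, Finset.sum_eq_single 0] at hlroot
    · simp at hlroot
    · intro i hi hne; rw [zero_pow hne, mul_zero]
    · intro h; exact absurd (Finset.mem_range.mpr (by omega)) h
  have hl1 : l ≠ 1 := by
    rintro rfl
    rw [hHeval 1] at hlroot
    simp only [one_pow, mul_one] at hlroot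
    have : ((∑ i ∈ Finset.range (m + 1), (m.choose i) ^ 2 : ℕ) : k) = 0 := by
      push_cast; exact hlroot
    rw [sum_choose_sq, CharP.cast_eq_zero_iff k p] at this
    have hdvd : p ∣ Nat.factorial (m + m) := by
      have h2 : (m + m).choose m * (Nat.factorial m * Nat.factorial (m + m - m)) =
          Nat.factorial (m + m) := by
        rw [← mul_assoc]; exact Nat.choose_mul_factorial_mul_factorial (by omega)
      exact h2 ▸ Dvd.dvd.mul_right this _
    have := (Nat.Prime.dvd_factorial hp).mp hdvd
    omega
  -- the cubic and its powers
  set t₁ : Polynomial k := X with ht₁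
  set t₂ : Polynomial k := X - C 1 with ht₂
  set t₃ : Polynomial k := X - C l with ht₃
  set P : Polynomial k := t₁ * (t₂ * t₃) with hPdef
  set W : Polynomial k := P ^ m with hWdef
  have hWco : W.coeff (2 * m) = 0 := by
    rw [hWdef, hPdef, ht₁, ht₂, ht₃, coeff_P_pow, ← hHeval l, hlroot, mul_zero]
  have hWdeg : W.natDegree ≤ 3 * m := by
    calc W.natDegree ≤ m * P.natDegree := natDegree_pow_le
    _ ≤ m * 3 := by
        refine Nat.mul_le_mul_left m ?_
        rw [hPdef]
        refine le_trans (natDegree_mul_le) ?_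
        have h2 : (t₂ * t₃).natDegree ≤ 2 :=
          le_trans natDegree_mul_le (by
            rw [ht₂, ht₃]
            have := natDegree_X_sub_C_le (1 : k)
            have := natDegree_X_sub_C_le l
            omega)
        rw [ht₁, natDegree_X]
        omega
    _ = 3 * m := by ring
  have hWall : ∀ i, p ∣ (i + 1) → W.coeff i = 0 := by
    intro i hdvd
    rcases eq_or_ne i (2 * m) with rfl | hne
    · exact hWco
    · apply coeff_eq_zero_of_natDegree_lt
      obtain ⟨c, hc⟩ := hdvd
      have hc0 : c ≠ 0 := by rintro rfl; omega
      have hc1 : c ≠ 1 := by rintro rfl; omega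
      have h2 : p * 2 ≤ p * c := Nat.mul_le_mul_left p (by omega)
      rw [← hc] at h2
      omega
  obtain ⟨q, hq⟩ := exists_antideriv p W (3 * m + 1) (by omega) hWall
  -- exponents
  have hmod : ((p + 1) / 2) % p = m + 1 := by
    rw [show (p + 1) / 2 = m + 1 by omega]; exact Nat.mod_eq_of_lt (by omega)
  obtain ⟨m₁, e₁⟩ : ∃ c, h₁ = p * c + (m + 1) := by
    refine ⟨h₁ / p, ?_⟩
    have h := hc₁; unfold Nat.ModEq at h; rw [hmod] at h
    have hd := Nat.div_add_mod h₁ p; omega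
  obtain ⟨m₂, e₂⟩ : ∃ c, h₂ = p * c + (m + 1) := by
    refine ⟨h₂ / p, ?_⟩
    have h := hc₂; unfold Nat.ModEq at h; rw [hmod] at h
    have hd := Nat.div_add_mod h₂ p; omega
  obtain ⟨m₃, e₃⟩ : ∃ c, h₃ = p * c + (m + 1) := by
    refine ⟨h₃ / p, ?_⟩
    have h := hc₃; unfold Nat.ModEq at h; rw [hmod] at h
    have hd := Nat.div_add_mod h₃ p; omega
  -- the key identity
  set B : Polynomial k := t₁ ^ h₁ * t₂ ^ h₂ * t₃ ^ h₃ with hBdef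
  set G : Polynomial k := t₁ ^ (m₁ + 1) * (t₂ ^ (m₂ + 1) * t₃ ^ (m₃ + 1)) with hGdef
  have g₁ : (m₁ + 1) * p = h₁ + m := by rw [e₁, hpm]; ring
  have g₂ : (m₂ + 1) * p = h₂ + m := by rw [e₂, hpm]; ring
  have g₃ : (m₃ + 1) * p = h₃ + m := by rw [e₃, hpm]; ring
  have hkey : B * W = G ^ p := by
    rw [hBdef, hWdef, hPdef, hGdef, mul_pow, mul_pow, mul_pow, mul_pow,
      ← pow_mul, ← pow_mul, ← pow_mul, g₁, g₂, g₃, pow_add, pow_add, pow_add]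
    ring
  set V : Polynomial k := G ^ p with hVdef
  have hV' : derivative V = 0 := by
    rw [hVdef, derivative_pow, CharP.cast_eq_zero k p, C_0, zero_mul, zero_mul]
  -- nonvanishing
  have hne : ∀ a : k, (X - C a) ≠ (0 : Polynomial k) := fun a => X_sub_C_ne_zero a
  have ht₁ne : t₁ ≠ 0 := X_ne_zero
  have ht₂ne : t₂ ≠ 0 := hne 1
  have ht₃ne : t₃ ≠ 0 := hne l
  have hGne : G ≠ 0 := by
    rw [hGdef]
    exact mul_ne_zero (pow_ne_zero _ ht₁ne) (mul_ne_zero (pow_ne_zero _ ht₂ne) (pow_ne_zero _ ht₃ne))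
  have hVne : V ≠ 0 := pow_ne_zero _ hGne
  have hBne : B ≠ 0 := by
    rw [hBdef]
    exact mul_ne_zero (mul_ne_zero (pow_ne_zero _ ht₁ne) (pow_ne_zero _ ht₂ne)) (pow_ne_zero _ ht₃ne)
  -- RatFunc
  set A := algebraMap (Polynomial k) (RatFunc k) with hA
  have hAVne : A V ≠ 0 := RatFunc.algebraMap_ne_zero hVne
  have hABne : A B ≠ 0 := RatFunc.algebraMap_ne_zero hBne
  refine ⟨0, 1, l, zero_ne_one, fun h => hl0 h.symm, fun h => hl1 h.symm, A q / A V, q, V, hVne, rfl, ?_⟩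
  have hX : RatFunc.X - RatFunc.C (0:k) = A t₁ := by
    rw [ht₁, hA, RatFunc.algebraMap_X, map_zero, sub_zero]
  have hX2 : RatFunc.X - RatFunc.C (1:k) = A t₂ := by
    rw [ht₂, hA, map_sub, RatFunc.algebraMap_X, RatFunc.algebraMap_C]
  have hX3 : RatFunc.X - RatFunc.C l = A t₃ := by
    rw [ht₃, hA, map_sub, RatFunc.algebraMap_X, RatFunc.algebraMap_C]
  have hmul : A B * A W = A V := by rw [← map_mul, hkey, hVdef]
  have hinv : (A B)⁻¹ = A W / A V := by
    rw [eq_div_iff hAVne, ← hmul, inv_mul_cancel_left₀ hABne]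
  rw [hq, hV', mul_zero, sub_zero, ← hA,
    hX, hX2, hX3, ← map_pow, ← map_pow, ← map_pow, ← map_mul, ← map_mul,
    show t₁ ^ h₁ * t₂ ^ h₂ * t₃ ^ h₃ = B from hBdef.symm, hinv,
    map_mul, pow_two, map_mul, div_eq_div_iff hAVne (mul_ne_zero hAVne hAVne)]
  ring
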